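/- Let A(z) = A_0 + A_1 z be a linear operator pencil with A_0, A_1 ∈ L(H,K). Suppose {R_j}_{j∈ℤ} ⊆ L(K,H) are geometrically bounded (‖R_j‖ ≤ c/(r-δ)^j and ‖R_{-j}‖ ≤ d(s+ε)^j for suitable constants whenever s < s+ε < r-δ < r) and satisfy the left fundamental equations R_{j-1}A_1 + R_j A_0 = δ_{j,0} I and the right fundamental equations A_1 R_{j-1} + A_0 R_j = δ_{j,0} I for all j ∈ ℤ. Then R(z) = Σ_{j∈ℤ} R_j z^j converges on the annulus U_{s,r} and satisfies R(z)A(z) = I and A(z)R(z) = I for all z ∈ U_{s,r}. -/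

import Mathlib

open ContinuousLinearMap

/-- Key abstract lemma: if `f₀, f₁ : ℤ → G` satisfy the "fundamental equation"
`f₁ (j-1) + f₀ j = δ_{j,0} e` and the corresponding Laurent-weighted series are summable,
then `Σ z^j f₀ j + z • Σ z^j f₁ j = e`. -/
lemma key_sum {G : Type*} [NormedAddCommGroup G] [NormedSpace ℂ G] [CompleteSpace G]
    (z : ℂ) (hz : z ≠ 0) (e : G) (f₀ f₁ : ℤ → G)
    (hf₀ : Summable (fun j : ℤ => z ^ j • f₀ j))
    (hf₁ : Summable (fun j : ℤ => z ^ j • f₁ j))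
    (heq : ∀ j : ℤ, f₁ (j - 1) + f₀ j = if j = 0 then e else 0) :
    (∑' j : ℤ, z ^ j • f₀ j) + z • (∑' j : ℤ, z ^ j • f₁ j) = e := by
  -- pull the scalar inside and shift the exponent
  have h1 : z • (∑' j : ℤ, z ^ j • f₁ j) = ∑' j : ℤ, z ^ (j + 1) • f₁ j := by
    rw [← Summable.tsum_const_smul z hf₁]
    refine tsum_congr fun j => ?_
    rw [smul_smul, ← zpow_one_add₀ hz, add_comm]
  have hsh : Summable (fun j : ℤ => z ^ (j + 1) • f₁ j) := by
    have := hf₁.const_smul z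
    refine this.congr fun j => ?_
    rw [smul_smul, ← zpow_one_add₀ hz, add_comm]
  -- reindex `j ↦ j - 1`
  have h2 : (∑' j : ℤ, z ^ (j + 1) • f₁ j) = ∑' j : ℤ, z ^ j • f₁ (j - 1) := by
    rw [← (Equiv.subRight (1 : ℤ)).tsum_eq (fun j => z ^ (j + 1) • f₁ j)]
    refine tsum_congr fun j => ?_
    simp [Equiv.subRight]
  have hsh' : Summable (fun j : ℤ => z ^ j • f₁ (j - 1)) := by
    have := ((Equiv.subRight (1 : ℤ)).summable_iff.mpr hsh)
    refine this.congr fun j => ?_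
    simp [Equiv.subRight, Function.comp]
  rw [h1, h2, ← Summable.tsum_add hf₀ hsh']
  have h3 : ∀ j : ℤ, z ^ j • f₀ j + z ^ j • f₁ (j - 1)
      = if j = 0 then e else 0 := by
    intro j
    rw [← smul_add, add_comm (f₀ j), heq j]
    split
    · next h => simp [h]
    · simp
  calc ∑' j : ℤ, (z ^ j • f₀ j + z ^ j • f₁ (j - 1))
      = ∑' j : ℤ, (if j = 0 then e else 0) := tsum_congr h3
    _ = e := tsum_ite_eq (0 : ℤ) (fun _ => e)

theorem fundamental_equations_give_resolvent
    {H K : Type*} [NormedAddCommGroup H] [NormedSpace ℂ H] [CompleteSpace H]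
    [NormedAddCommGroup K] [NormedSpace ℂ K] [CompleteSpace K]
    (s r : ℝ) (hs : 0 ≤ s) (hsr : s < r)
    (A₀ A₁ : H →L[ℂ] K) (R : ℤ → (K →L[ℂ] H))
    (hgb : ∀ δ ε : ℝ, 0 < δ → 0 < ε → s + ε < r - δ →
      ∃ c d : ℝ, 0 < c ∧ 0 < d ∧
        ∀ j : ℕ, ‖R (j : ℤ)‖ ≤ c / (r - δ) ^ j ∧ ‖R (-(j : ℤ))‖ ≤ d * (s + ε) ^ j)
    (hleft : ∀ j : ℤ, (R (j - 1)).comp A₁ + (R j).comp A₀ =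
      if j = 0 then (1 : H →L[ℂ] H) else 0)
    (hright : ∀ j : ℤ, A₁.comp (R (j - 1)) + A₀.comp (R j) =
      if j = 0 then (1 : K →L[ℂ] K) else 0) :
    ∀ z : ℂ, s < ‖z‖ → ‖z‖ < r →
      Summable (fun j : ℤ => z ^ j • R j) ∧
      (∑' j : ℤ, z ^ j • R j).comp (A₀ + z • A₁) = 1 ∧
      (A₀ + z • A₁).comp (∑' j : ℤ, z ^ j • R j) = 1 := by
  intro z hz1 hz2
  set t : ℝ := ‖z‖ with ht
  have ht0 : 0 < t := lt_of_le_of_lt hs hz1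
  have hz : z ≠ 0 := by
    intro h; rw [h] at ht; simp at ht; rw [ht] at ht0; exact lt_irrefl _ ht0
  obtain ⟨c, d, hc, hd, hbd⟩ := hgb ((r - t) / 2) ((t - s) / 2)
    (by linarith) (by linarith) (by linarith)
  set ρ : ℝ := r - (r - t) / 2 with hρdef
  set σ : ℝ := s + (t - s) / 2 with hσdef
  have hρt : t < ρ := by rw [hρdef]; linarith
  have hρ0 : 0 < ρ := lt_trans ht0 hρt
  have hσ0 : 0 ≤ σ := by rw [hσdef]; linarith
  have hσt : σ < t := by rw [hσdef]; linarith
  -- summability of the norms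
  have hnorm : Summable (fun j : ℤ => ‖z ^ j • R j‖) := by
    apply Summable.of_nat_of_neg_add_one
    · refine Summable.of_nonneg_of_le (fun n => norm_nonneg _) (fun n => ?_)
        ((summable_geometric_of_lt_one (by positivity)
          ((div_lt_one hρ0).mpr hρt)).mul_left c)
      rw [norm_smul (z ^ (n : ℤ)) (R (n : ℤ)), norm_zpow, ← ht, zpow_natCast]
      calc t ^ n * ‖R (n : ℤ)‖ ≤ t ^ n * (c / ρ ^ n) := by
            exact mul_le_mul_of_nonneg_left (hbd n).1 (by positivity)
        _ = c * (t / ρ) ^ n := by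
            rw [div_pow]; field_simp
    · refine Summable.of_nonneg_of_le (fun n => norm_nonneg _) (fun n => ?_)
        ((summable_geometric_of_lt_one (by positivity)
          ((div_lt_one ht0).mpr hσt)).mul_left (d * (σ / t)))
      rw [norm_smul (z ^ (-((n : ℤ) + 1))) (R (-((n : ℤ) + 1))), norm_zpow, ← ht]
      have hcast : (-((n : ℤ) + 1)) = -(((n + 1 : ℕ)) : ℤ) := by push_cast; ring
      rw [hcast, zpow_neg, zpow_natCast]
      have hb := (hbd (n + 1)).2
      calc (t ^ (n + 1))⁻¹ * ‖R (-((n + 1 : ℕ) : ℤ))‖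
          ≤ (t ^ (n + 1))⁻¹ * (d * σ ^ (n + 1)) := by
            exact mul_le_mul_of_nonneg_left hb (by positivity)
        _ = d * (σ / t) * (σ / t) ^ n := by
            rw [div_pow, pow_succ]; field_simp; ring
  have hsum : Summable (fun j : ℤ => z ^ j • R j) := hnorm.of_norm
  refine ⟨hsum, ?_, ?_⟩
  · -- left identity
    have hmap : ∀ B : H →L[ℂ] K,
        (∑' j : ℤ, z ^ j • R j).comp B = ∑' j : ℤ, z ^ j • (R j).comp B := by
      intro B
      have h := ((compL ℂ H K H).flip B).map_tsum hsum
      simp only [ContinuousLinearMap.flip_apply, ContinuousLinearMap.compL_apply] at h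
      rw [h]
      refine tsum_congr fun j => ?_
      simp [ContinuousLinearMap.smul_comp]
    have hsum' : ∀ B : H →L[ℂ] K, Summable (fun j : ℤ => z ^ j • (R j).comp B) := by
      intro B
      have := hsum.map ((compL ℂ H K H).flip B) ((compL ℂ H K H).flip B).continuous
      refine this.congr fun j => ?_
      simp [Function.comp, ContinuousLinearMap.smul_comp]
    rw [comp_add, ContinuousLinearMap.comp_smul, hmap A₀, hmap A₁]
    exact key_sum z hz 1 (fun j => (R j).comp A₀) (fun j => (R j).comp A₁)
      (hsum' A₀) (hsum' A₁) hleft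
  · -- right identity
    have hmap : ∀ B : H →L[ℂ] K,
        B.comp (∑' j : ℤ, z ^ j • R j) = ∑' j : ℤ, z ^ j • B.comp (R j) := by
      intro B
      have h := ((compL ℂ K H K) B).map_tsum hsum
      simp only [ContinuousLinearMap.compL_apply] at h
      rw [h]
      refine tsum_congr fun j => ?_
      simp
    have hsum' : ∀ B : H →L[ℂ] K, Summable (fun j : ℤ => z ^ j • B.comp (R j)) := by
      intro B
      have := hsum.map ((compL ℂ K H K) B) ((compL ℂ K H K) B).continuous
      refine this.congr fun j => ?_
      simp [Function.comp]
    rw [add_comp, ContinuousLinearMap.smul_comp, hmap A₀, hmap A₁]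
    exact key_sum z hz 1 (fun j => A₀.comp (R j)) (fun j => A₁.comp (R j))
      (hsum' A₀) (hsum' A₁) hright
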